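/- Let ρ be a positive semidefinite complex matrix indexed by (Fin 3 → Fin 2) with trace 1 (a three-qubit density matrix). Define z₁ = (⟨Z_A⟩ + ⟨Z_B⟩ + ⟨Z_C⟩)/3 with ⟨Z_A⟩ = Σ_x (−1)^{x(0)} ρ(x,x), ⟨Z_B⟩ = Σ_x (−1)^{x(1)} ρ(x,x), ⟨Z_C⟩ = Σ_x (−1)^{x(2)} ρ(x,x); define z₂ = (⟨Z_A Z_B⟩ + ⟨Z_A Z_C⟩ + ⟨Z_B Z_C⟩)/3 with ⟨Z_A Z_B⟩ = Σ_x (−1)^{x(0)+x(1)} ρ(x,x) and analogously for the other pairs; and define z₃ = Σ_x (−1)^{x(0)+x(1)+x(2)} ρ(x,x). Let |GHZ₃⟩ ∈ ℂ^(Fin 3 → Fin 2) be given by |GHZ₃⟩(x) = 1/√2 if x is constant and 0 otherwise. Then ⟨GHZ₃| ρ |GHZ₃⟩ ≤ (1/16)·( √(1 + 3z₁ + 3z₂ + z₃) + √(1 − 3z₁ + 3z₂ − z₃) )². -/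

import Mathlib

open scoped BigOperators
open Matrix ComplexOrder

/-- The three-qubit GHZ state: amplitude `1/√2` on constant functions, `0` elsewhere. -/
noncomputable def ghz3 : (Fin 3 → Fin 2) → ℂ :=
  fun x => if ∀ i j : Fin 3, x i = x j then ((1 / Real.sqrt 2 : ℝ) : ℂ) else 0

/-- The one-body Pauli-Z expectation `⟨Z_i⟩` of a three-qubit density matrix. -/
noncomputable def zExp (ρ : Matrix (Fin 3 → Fin 2) (Fin 3 → Fin 2) ℂ) (i : Fin 3) : ℝ :=
  ∑ x : Fin 3 → Fin 2, (-1 : ℝ) ^ ((x i : ℕ)) * (ρ x x).re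

/-- The two-body Pauli-Z correlation `⟨Z_i Z_j⟩` of a three-qubit density matrix. -/
noncomputable def zzExp (ρ : Matrix (Fin 3 → Fin 2) (Fin 3 → Fin 2) ℂ)
    (i j : Fin 3) : ℝ :=
  ∑ x : Fin 3 → Fin 2, (-1 : ℝ) ^ ((x i : ℕ) + (x j : ℕ)) * (ρ x x).re

/-- The three-body Pauli-Z correlation `⟨Z_A Z_B Z_C⟩` of a three-qubit density matrix. -/
noncomputable def zzzExp (ρ : Matrix (Fin 3 → Fin 2) (Fin 3 → Fin 2) ℂ) : ℝ :=
  ∑ x : Fin 3 → Fin 2, (-1 : ℝ) ^ ((x 0 : ℕ) + (x 1 : ℕ) + (x 2 : ℕ)) * (ρ x x).re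

/-! ### Auxiliary material -/

noncomputable def P (u : Fin 3 → Fin 2) : (Fin 3 → Fin 2) → ℂ := Pi.single u 1

def v0 : Fin 3 → Fin 2 := fun _ => 0
def v1 : Fin 3 → Fin 2 := fun _ => 1

lemma starP (u : Fin 3 → Fin 2) : star (P u) = P u := by
  funext x; simp [P, Pi.single_apply, apply_ite]

lemma PdotP (ρ : Matrix (Fin 3 → Fin 2) (Fin 3 → Fin 2) ℂ) (u v : Fin 3 → Fin 2) :
    P u ⬝ᵥ ρ *ᵥ P v = ρ u v := by
  simp [P, single_dotProduct, mulVec_single]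

lemma expandQF (ρ : Matrix (Fin 3 → Fin 2) (Fin 3 → Fin 2) ℂ) (u v : Fin 3 → Fin 2) (s t : ℂ) :
    star (s • P u + t • P v) ⬝ᵥ ρ *ᵥ (s • P u + t • P v)
      = star s * s * ρ u u + star s * t * ρ u v + star t * s * ρ v u + star t * t * ρ v v := by
  simp only [star_add, star_smul, dotProduct_add, add_dotProduct, mulVec_add, mulVec_smul,
    smul_dotProduct, dotProduct_smul, starP, PdotP, smul_eq_mul]
  ring

lemma ghz3_eq : ghz3 = ((1 / Real.sqrt 2 : ℝ) : ℂ) • P v0 + ((1 / Real.sqrt 2 : ℝ) : ℂ) • P v1 := by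
  funext x
  by_cases h : ∀ i j : Fin 3, x i = x j
  · rcases (by decide : ∀ a : Fin 2, a = 0 ∨ a = 1) (x 0) with h0 | h0
    · have hx : x = v0 := by funext i; rw [h i 0, h0]; rfl
      subst hx
      simp [ghz3, P, Pi.single_apply, v0, v1, h, show v0 ≠ v1 from by decide]
    · have hx : x = v1 := by funext i; rw [h i 0, h0]; rfl
      subst hx
      simp [ghz3, P, Pi.single_apply, v0, v1, h, show v1 ≠ v0 from by decide]
  · have h0 : x ≠ v0 := fun hx => h (by subst hx; intro i j; rfl)
    have h1 : x ≠ v1 := fun hx => h (by subst hx; intro i j; rfl)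
    simp [ghz3, P, Pi.single_apply, h, h0, h1]

lemma coeff_plus (x : Fin 3 → Fin 2) :
    (1 + (-1:ℝ)^(x 0:ℕ) + (-1:ℝ)^(x 1:ℕ) + (-1:ℝ)^(x 2:ℕ) + (-1:ℝ)^((x 0:ℕ)+(x 1:ℕ))
      + (-1:ℝ)^((x 0:ℕ)+(x 2:ℕ)) + (-1:ℝ)^((x 1:ℕ)+(x 2:ℕ))
      + (-1:ℝ)^((x 0:ℕ)+(x 1:ℕ)+(x 2:ℕ))) = if x = v0 then 8 else 0 := by
  have two : ∀ a : Fin 2, a = 0 ∨ a = 1 := by decide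
  rcases two (x 0) with h0 | h0 <;> rcases two (x 1) with h1 | h1 <;> rcases two (x 2) with h2 | h2
  · have hx : x = v0 := by funext i; fin_cases i <;> assumption
    simp only [hx, if_pos rfl]; norm_num [v0]
  all_goals {
    have hx : x ≠ v0 := by
      intro h; subst h
      first
        | exact absurd h0 (by decide)
        | exact absurd h1 (by decide)
        | exact absurd h2 (by decide)
    rw [if_neg hx, h0, h1, h2]
    norm_num }

lemma coeff_minus (x : Fin 3 → Fin 2) :
    (1 - (-1:ℝ)^(x 0:ℕ) - (-1:ℝ)^(x 1:ℕ) - (-1:ℝ)^(x 2:ℕ) + (-1:ℝ)^((x 0:ℕ)+(x 1:ℕ))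
      + (-1:ℝ)^((x 0:ℕ)+(x 2:ℕ)) + (-1:ℝ)^((x 1:ℕ)+(x 2:ℕ))
      - (-1:ℝ)^((x 0:ℕ)+(x 1:ℕ)+(x 2:ℕ))) = if x = v1 then 8 else 0 := by
  have two : ∀ a : Fin 2, a = 0 ∨ a = 1 := by decide
  rcases two (x 0) with h0 | h0 <;> rcases two (x 1) with h1 | h1 <;> rcases two (x 2) with h2 | h2
  all_goals first
  | { have hx : x = v1 := by funext i; fin_cases i <;> assumption
      simp only [hx, if_pos rfl]; norm_num [v1] }
  | { have hx : x ≠ v1 := by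
        intro h; subst h
        first
          | exact absurd h0 (by decide)
          | exact absurd h1 (by decide)
          | exact absurd h2 (by decide)
      rw [if_neg hx, h0, h1, h2]
      norm_num }

set_option maxHeartbeats 1000000 in
/-- for any three-qubit density matrix `ρ`, with `z₁, z₂, z₃` the averaged
one-, two-, and three-body Pauli-Z correlations, the GHZ fidelity is bounded by
`(1/16)·(√(1 + 3z₁ + 3z₂ + z₃) + √(1 − 3z₁ + 3z₂ − z₃))²`. -/
theorem ghz3_fidelity_le_sqrt_bound
    (ρ : Matrix (Fin 3 → Fin 2) (Fin 3 → Fin 2) ℂ)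
    (hρ : ρ.PosSemidef) (htr : ρ.trace = 1) :
    (star ghz3 ⬝ᵥ ρ *ᵥ ghz3).re ≤
      (1 / 16) *
        (Real.sqrt (1 + 3 * ((zExp ρ 0 + zExp ρ 1 + zExp ρ 2) / 3) +
            3 * ((zzExp ρ 0 1 + zzExp ρ 0 2 + zzExp ρ 1 2) / 3) + zzzExp ρ) +
          Real.sqrt (1 - 3 * ((zExp ρ 0 + zExp ρ 1 + zExp ρ 2) / 3) +
            3 * ((zzExp ρ 0 1 + zzExp ρ 0 2 + zzExp ρ 1 2) / 3) - zzzExp ρ)) ^ 2 := by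
  set a : ℝ := (ρ v0 v0).re with ha_def
  set b : ℝ := (ρ v1 v1).re with hb_def
  set c : ℝ := (ρ v0 v1).re with hc_def
  -- trace, real part
  have h1 : ∑ x : Fin 3 → Fin 2, (ρ x x).re = 1 := by
    have := congrArg Complex.re htr
    simpa [Matrix.trace, Matrix.diag, Complex.ofReal_sum] using this
  -- hermiticity
  have hherm : ρ v1 v0 = star (ρ v0 v1) := by
    conv_lhs => rw [← hρ.1]
    rfl
  have hherm_re : (ρ v1 v0).re = c := by rw [hherm]; simp [hc_def]
  -- diagonal entries nonneg
  have hdiag : ∀ u : Fin 3 → Fin 2, 0 ≤ (ρ u u).re := by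
    intro u
    have h := hρ.dotProduct_mulVec_nonneg (P u)
    rw [starP, PdotP] at h
    exact (Complex.le_def.mp h).1
  have ha : 0 ≤ a := hdiag v0
  have hb : 0 ≤ b := hdiag v1
  -- the two combinations equal 8a and 8b
  have hsum_plus : ∑ x : Fin 3 → Fin 2,
      (1 + (-1:ℝ)^(x 0:ℕ) + (-1:ℝ)^(x 1:ℕ) + (-1:ℝ)^(x 2:ℕ) + (-1:ℝ)^((x 0:ℕ)+(x 1:ℕ))
        + (-1:ℝ)^((x 0:ℕ)+(x 2:ℕ)) + (-1:ℝ)^((x 1:ℕ)+(x 2:ℕ))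
        + (-1:ℝ)^((x 0:ℕ)+(x 1:ℕ)+(x 2:ℕ))) * (ρ x x).re = 8 * a := by
    calc ∑ x : Fin 3 → Fin 2,
        (1 + (-1:ℝ)^(x 0:ℕ) + (-1:ℝ)^(x 1:ℕ) + (-1:ℝ)^(x 2:ℕ) + (-1:ℝ)^((x 0:ℕ)+(x 1:ℕ))
          + (-1:ℝ)^((x 0:ℕ)+(x 2:ℕ)) + (-1:ℝ)^((x 1:ℕ)+(x 2:ℕ))
          + (-1:ℝ)^((x 0:ℕ)+(x 1:ℕ)+(x 2:ℕ))) * (ρ x x).re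
        = ∑ x : Fin 3 → Fin 2, (if x = v0 then (8:ℝ) else 0) * (ρ x x).re :=
          Finset.sum_congr rfl fun x _ => by rw [coeff_plus]
      _ = 8 * a := by simp [ite_mul, ← ha_def]
  have hsum_minus : ∑ x : Fin 3 → Fin 2,
      (1 - (-1:ℝ)^(x 0:ℕ) - (-1:ℝ)^(x 1:ℕ) - (-1:ℝ)^(x 2:ℕ) + (-1:ℝ)^((x 0:ℕ)+(x 1:ℕ))
        + (-1:ℝ)^((x 0:ℕ)+(x 2:ℕ)) + (-1:ℝ)^((x 1:ℕ)+(x 2:ℕ))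
        - (-1:ℝ)^((x 0:ℕ)+(x 1:ℕ)+(x 2:ℕ))) * (ρ x x).re = 8 * b := by
    calc ∑ x : Fin 3 → Fin 2,
        (1 - (-1:ℝ)^(x 0:ℕ) - (-1:ℝ)^(x 1:ℕ) - (-1:ℝ)^(x 2:ℕ) + (-1:ℝ)^((x 0:ℕ)+(x 1:ℕ))
          + (-1:ℝ)^((x 0:ℕ)+(x 2:ℕ)) + (-1:ℝ)^((x 1:ℕ)+(x 2:ℕ))
          - (-1:ℝ)^((x 0:ℕ)+(x 1:ℕ)+(x 2:ℕ))) * (ρ x x).re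
        = ∑ x : Fin 3 → Fin 2, (if x = v1 then (8:ℝ) else 0) * (ρ x x).re :=
          Finset.sum_congr rfl fun x _ => by rw [coeff_minus]
      _ = 8 * b := by simp [ite_mul, ← hb_def]
  simp only [add_mul, sub_mul, one_mul, Finset.sum_add_distrib, Finset.sum_sub_distrib]
    at hsum_plus hsum_minus
  have hplus : 1 + 3 * ((zExp ρ 0 + zExp ρ 1 + zExp ρ 2) / 3) +
      3 * ((zzExp ρ 0 1 + zzExp ρ 0 2 + zzExp ρ 1 2) / 3) + zzzExp ρ = 8 * a := by
    simp only [zExp, zzExp, zzzExp]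
    linarith [hsum_plus, h1]
  have hminus : 1 - 3 * ((zExp ρ 0 + zExp ρ 1 + zExp ρ 2) / 3) +
      3 * ((zzExp ρ 0 1 + zzExp ρ 0 2 + zzExp ρ 1 2) / 3) - zzzExp ρ = 8 * b := by
    simp only [zExp, zzExp, zzzExp]
    linarith [hsum_minus, h1]
  -- the fidelity
  have hF : (star ghz3 ⬝ᵥ ρ *ᵥ ghz3).re = (1/2) * (a + b + 2 * c) := by
    rw [ghz3_eq, expandQF]
    have hs : star ((1 / Real.sqrt 2 : ℝ) : ℂ) = ((1 / Real.sqrt 2 : ℝ) : ℂ) := by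
      simp [Complex.star_def, Complex.conj_ofReal]
    rw [hs]
    have hsqr : (1 / Real.sqrt 2 : ℝ) * (1 / Real.sqrt 2 : ℝ) = (1/2 : ℝ) := by
      rw [div_mul_div_comm, one_mul, Real.mul_self_sqrt (by norm_num : (0:ℝ) ≤ 2)]
    have hsq : ((1 / Real.sqrt 2 : ℝ) : ℂ) * ((1 / Real.sqrt 2 : ℝ) : ℂ) = ((1/2 : ℝ) : ℂ) := by
      rw [← Complex.ofReal_mul, hsqr]
    rw [show ∀ z w u v' : ℂ, ((1 / Real.sqrt 2 : ℝ) : ℂ) * ((1 / Real.sqrt 2 : ℝ) : ℂ) * z +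
        ((1 / Real.sqrt 2 : ℝ) : ℂ) * ((1 / Real.sqrt 2 : ℝ) : ℂ) * w +
        ((1 / Real.sqrt 2 : ℝ) : ℂ) * ((1 / Real.sqrt 2 : ℝ) : ℂ) * u +
        ((1 / Real.sqrt 2 : ℝ) : ℂ) * ((1 / Real.sqrt 2 : ℝ) : ℂ) * v' =
        ((1 / Real.sqrt 2 : ℝ) : ℂ) * ((1 / Real.sqrt 2 : ℝ) : ℂ) * (z + w + u + v')
        from fun z w u v' => by ring, hsq]
    simp only [Complex.mul_re, Complex.ofReal_re, Complex.ofReal_im, Complex.add_re,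
      Complex.add_im, zero_mul, sub_zero]
    rw [hherm_re]
    ring
  -- the off-diagonal bound via the quadratic form
  have hquad : ∀ t : ℝ, 0 ≤ a * (t*t) + (2*c) * t + b := by
    intro t
    have h := hρ.dotProduct_mulVec_nonneg ((t:ℂ) • P v0 + (1:ℂ) • P v1)
    rw [expandQF] at h
    have hre := (Complex.le_def.mp h).1
    simp only [Complex.zero_re] at hre
    have hst : star ((t:ℂ)) = (t:ℂ) := by simp [Complex.star_def, Complex.conj_ofReal]
    rw [hst] at hre
    simp only [star_one, one_mul, mul_one, ← Complex.ofReal_mul, Complex.add_re,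
      Complex.mul_re, Complex.ofReal_re, Complex.ofReal_im, zero_mul, sub_zero,
      mul_zero, zero_sub] at hre
    rw [hherm_re, ← hc_def] at hre
    nlinarith [hre]
  have hd := discrim_le_zero hquad
  rw [discrim] at hd
  have hcle : c ≤ Real.sqrt a * Real.sqrt b := by
    rw [← Real.sqrt_mul ha b]
    nlinarith [Real.sq_sqrt (mul_nonneg ha hb), Real.sqrt_nonneg (a*b),
      sq_nonneg (Real.sqrt (a*b) - c), sq_nonneg (Real.sqrt (a*b) + c)]
  rw [hF, hplus, hminus]
  rw [show (8*a : ℝ) = 8 * a from rfl, Real.sqrt_mul (by norm_num : (0:ℝ) ≤ 8) a,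
    Real.sqrt_mul (by norm_num : (0:ℝ) ≤ 8) b]
  nlinarith [Real.sq_sqrt ha, Real.sq_sqrt hb, Real.sq_sqrt (show (0:ℝ) ≤ 8 by norm_num),
    Real.sqrt_nonneg a, Real.sqrt_nonneg b, Real.sqrt_nonneg 8, hcle,
    sq_nonneg (Real.sqrt a - Real.sqrt b), sq_nonneg (Real.sqrt a + Real.sqrt b)]
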